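/- Let p be a prime and let t ≥ 1, j ≥ 0, j' ≥ 1 be integers with 1 ≤ t ≤ p^{j'}. The following are equivalent: (a) p^j divides the binomial coefficient C(p^{j'}, l) for every l = 1, 2, …, t; (b) p^j divides C(p^{j'}, p^{⌊log_p t⌋}); (c) j' ≥ j + ⌊log_p t⌋. -/

import Mathlib

lemma key_fact {p n k : ℕ} (hp : p.Prime) (hk : k ≠ 0) (hkn : k ≤ p ^ n) :
    (Nat.choose (p ^ n) k).factorization p = n - k.factorization p := by
  have h := Nat.Prime.emultiplicity_choose_prime_pow hp hkn hk
  rw [← Nat.multiplicity_eq_factorization hp (Nat.choose_pos hkn).ne',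
    ← Nat.multiplicity_eq_factorization hp hk]
  have hfin : FiniteMultiplicity p (Nat.choose (p ^ n) k) :=
    Nat.finiteMultiplicity_iff.2 ⟨hp.ne_one, Nat.choose_pos hkn⟩
  rw [hfin.emultiplicity_eq_multiplicity] at h
  exact_mod_cast h

/-- Let `p` be a prime and `t ≥ 1`, `j ≥ 0`, `j' ≥ 1` integers with `t ≤ p ^ j'`.  The following
are equivalent: (a) `p ^ j` divides `C(p ^ j', l)` for every `l = 1, …, t`;
(b) `p ^ j` divides `C(p ^ j', p ^ ⌊log_p t⌋)`; (c) `j' ≥ j + ⌊log_p t⌋`.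
(Stated as the conjunction of the equivalences (a) ↔ (c) and (b) ↔ (c).) -/
theorem stmt_8 {p t j j' : ℕ} (hp : p.Prime) (ht : 1 ≤ t) (hj' : 1 ≤ j')
    (htp : t ≤ p ^ j') :
    ((∀ l : ℕ, 1 ≤ l → l ≤ t → p ^ j ∣ Nat.choose (p ^ j') l) ↔ j + Nat.log p t ≤ j') ∧
      ((p ^ j ∣ Nat.choose (p ^ j') (p ^ Nat.log p t)) ↔ j + Nat.log p t ≤ j') := by
  set L := Nat.log p t with hL
  have hpL : p ^ L ≤ t := Nat.pow_log_le_self p (by omega)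
  have hLj' : L ≤ j' := by
    have := Nat.log_mono_right (b := p) htp
    rwa [Nat.log_pow hp.one_lt] at this
  have hb : (p ^ j ∣ Nat.choose (p ^ j') (p ^ L)) ↔ j + L ≤ j' := by
    rw [Nat.Prime.pow_dvd_iff_le_factorization hp (Nat.choose_pos (hpL.trans htp)).ne',
      key_fact hp (pow_pos hp.pos L).ne' (hpL.trans htp),
      Nat.Prime.factorization_pow hp, Finsupp.single_eq_same]
    omega
  refine ⟨⟨fun h => hb.1 (h _ (Nat.one_le_pow _ _ hp.pos) hpL), fun h l hl1 hlt => ?_⟩, hb⟩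
  · have hl0 : l ≠ 0 := by omega
    have hlpn : l ≤ p ^ j' := hlt.trans htp
    have hv : l.factorization p ≤ L := by
      have hd : p ^ l.factorization p ≤ l := Nat.le_of_dvd (by omega) (Nat.ordProj_dvd l p)
      calc l.factorization p ≤ Nat.log p l := by
            rwa [Nat.le_log_iff_pow_le hp.one_lt hl0]
        _ ≤ L := Nat.log_mono_right hlt
    rw [Nat.Prime.pow_dvd_iff_le_factorization hp (Nat.choose_pos hlpn).ne', key_fact hp hl0 hlpn]
    omega
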